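/- arXiv:1204.0609 — 7 statements merged into one kernel-verified Lean document; each statement's English description precedes it below -/
import Mathlib

section
/- For the 3-generalized Fibonacci (Tribonacci-type) numbers, the determinant of the 3×3 matrix (f^{(3)}_{n+i+j})_{0 ≤ i,j ≤ 2} equals (-1)^{(2n+3)·2/2} = (-1)^{2n+3} = -1 for all n. -/
theorem tribonacci_det (f : ℕ → ℤ) (h0 : f 0 = 0) (h1 : f 1 = 0) (h2 : f 2 = 1)
    (hrec : ∀ n, f (n + 3) = f (n + 2) + f (n + 1) + f n) :
    ∀ n : ℕ,
      (Matrix.of fun i j : Fin 3 => f (n + i + j)).det = -1 := by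
  intro n
  induction n with
  | zero =>
    have h3 := hrec 0
    have h4 := hrec 1
    simp [Matrix.det_fin_three, h0, h1, h2] at *
  | succ n ih =>
    have e3 := hrec n
    have e4 := hrec (n + 1)
    have e5 := hrec (n + 2)
    simp only [Matrix.det_fin_three, Matrix.of_apply] at ih ⊢
    norm_num at ih ⊢
    ring_nf at e3 e4 e5 ih ⊢
    rw [e5, e4, e3]
    rw [e4, e3] at ih
    linear_combination ih
end

section
/- For k ≥ 2 and every n, the determinant of the k×k Hankel matrix (f^{(k)}_{n+i+j})_{0 ≤ i,j ≤ k-1} of k-generalized Fibonacci numbers equals (-1)^{(2n+k)(k-1)/2}. -/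
open Equiv Matrix Finset

lemma sign_revPerm_aux : ∀ n : ℕ,
    Equiv.Perm.sign (Fin.revPerm : Equiv.Perm (Fin n)) = (-1) ^ (n * (n - 1) / 2)
  | 0 => by decide
  | (n + 1) => by
    have key : (Fin.revPerm : Equiv.Perm (Fin (n + 1)))
        = finRotate (n + 1) *
          (finSuccEquivLast.symm.permCongr
            (Equiv.optionCongr (Fin.revPerm : Equiv.Perm (Fin n)))) := by
      ext i
      refine Fin.lastCases ?_ (fun i => ?_) i
      · simp [Equiv.permCongr_apply, finSuccEquivLast_last, finRotate_last]
      · simp only [Fin.revPerm_apply, Equiv.Perm.mul_apply, Equiv.permCongr_apply,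
          Equiv.symm_symm, finSuccEquivLast_castSucc, Equiv.optionCongr_apply,
          Option.map_some, finSuccEquivLast_symm_some]
        have h1 : (Fin.castSucc (Fin.rev i)) ≠ Fin.last n := by
          intro h
          have := congrArg Fin.val h
          simp [Fin.val_rev] at this
          omega
        rw [coe_finRotate, if_neg h1]
        simp [Fin.val_rev]
        omega
    rw [key, _root_.map_mul, sign_finRotate, Equiv.Perm.sign_permCongr,
      Equiv.optionCongr_sign, sign_revPerm_aux n]
    rw [← pow_add]
    congr 1
    have h2 : 2 ∣ n * (n - 1) := by
      rcases n with _ | t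
      · simp
      · simpa [mul_comm] using (Nat.even_mul_succ_self t).two_dvd
    obtain ⟨c, hc⟩ := h2
    have h3 : (n + 1) * (n + 1 - 1) = n * (n - 1) + 2 * n := by
      rcases n with _ | t
      · simp
      · simp only [Nat.add_sub_cancel]
        ring
    rw [h3, hc]
    omega

theorem k_fibonacci_det (k : ℕ) (hk : 2 ≤ k) (f : ℕ → ℤ)
    (hinit : ∀ n ≤ k - 2, f n = 0) (hk1 : f (k - 1) = 1)
    (hrec : ∀ n, k ≤ n → f n = ∑ i ∈ Finset.Icc 1 k, f (n - i)) :
    ∀ n : ℕ,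
      (Matrix.of fun i j : Fin k => f (n + i + j)).det
        = (-1) ^ ((2 * n + k) * (k - 1) / 2) := by
  obtain ⟨m, rfl⟩ : ∃ m, k = m + 2 := ⟨k - 2, by omega⟩
  have hinit' : ∀ n ≤ m, f n = 0 := by simpa using hinit
  have hk1' : f (m + 1) = 1 := by simpa using hk1
  intro n
  induction n with
  | zero =>
    have hB : (Matrix.of fun i j : Fin (m + 2) => f (0 + i + j))
        = (Matrix.of fun i j : Fin (m + 2) => f ((Fin.rev i : ℕ) + j)).submatrix
            ⇑Fin.revPerm id := by
      ext i j
      simp only [Matrix.submatrix_apply, of_apply, Fin.revPerm_apply, id_eq, Fin.val_rev]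
      congr 1
      have := i.isLt
      omega
    rw [hB, Matrix.det_permute, sign_revPerm_aux]
    have htri : (Matrix.of fun i j : Fin (m + 2) => f ((Fin.rev i : ℕ) + j)).BlockTriangular
        id := by
      intro i j hij
      simp only [of_apply]
      apply hinit'
      have hi := i.isLt
      have := Fin.val_rev i
      simp only [id_eq] at hij
      omega
    rw [Matrix.det_of_upperTriangular htri]
    have hdiag : ∀ i : Fin (m + 2),
        (Matrix.of fun i j : Fin (m + 2) => f ((Fin.rev i : ℕ) + j)) i i = 1 := by
      intro i
      simp only [of_apply]
      have hi := i.isLt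
      have := Fin.val_rev i
      have h : (Fin.rev i : ℕ) + i = m + 1 := by omega
      rw [h, hk1']
    rw [Finset.prod_congr rfl fun i _ => hdiag i, Finset.prod_const_one, mul_one]
    simp
  | succ n ih =>
    set P : Matrix (Fin (m + 2)) (Fin (m + 2)) ℤ :=
      (Matrix.of fun i j : Fin (m + 2) => f (n + i + j)).submatrix ⇑(finRotate (m + 2)) id
      with hP
    have hM : (Matrix.of fun i j : Fin (m + 2) => f (n + 1 + i + j))
        = P.updateRow (Fin.last (m + 1)) (∑ l, (1 : ℤ) • P l) := by
      ext i j
      rcases eq_or_ne i (Fin.last (m + 1)) with rfl | hi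
      · rw [Matrix.updateRow_self]
        simp only [one_smul, hP]
        have hsum : (∑ l, ((Matrix.of fun i j : Fin (m + 2) => f (n + i + j)).submatrix
            ⇑(finRotate (m + 2)) id) l) j
            = ∑ l : Fin (m + 2), f (n + (finRotate (m + 2) l : Fin (m+2)) + j) := by
          exact Finset.sum_apply _ _ _
        simp only [of_apply]
        rw [hsum]
        have hsum2 : ∑ l : Fin (m + 2), f (n + ((finRotate (m + 2) l : Fin (m+2)) : ℕ) + j)
            = ∑ l : Fin (m + 2), f (n + (l : ℕ) + j) :=
          Equiv.sum_comp (finRotate (m + 2)) (fun l : Fin (m + 2) => f (n + (l : ℕ) + j))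
        rw [hsum2, Fin.sum_univ_eq_sum_range (fun l => f (n + l + j))]
        have harg : n + 1 + (Fin.last (m + 1) : ℕ) + j = n + m + 2 + j := by
          simp [Fin.val_last]; omega
        rw [harg, hrec (n + m + 2 + j) (by omega)]
        refine Finset.sum_nbij' (fun i => m + 2 - i) (fun l => m + 2 - l) ?_ ?_ ?_ ?_ ?_ <;>
            intro a ha <;> simp only [Finset.mem_Icc, Finset.mem_range] at ha ⊢
        · omega
        · omega
        · omega
        · omega
        · congr 1
          omega
      · rw [Matrix.updateRow_ne hi]
        simp only [hP, Matrix.submatrix_apply, of_apply, id_eq]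
        congr 1
        have hne : i ≠ Fin.last (m + 1) := hi
        rw [coe_finRotate, if_neg hne]
        omega
    rw [hM, Matrix.det_updateRow_sum, hP, Matrix.det_permute, sign_finRotate, ih]
    have hexp : (2 * (n + 1) + (m + 2)) * (m + 2 - 1) / 2
        = (m + 1) + (2 * n + (m + 2)) * (m + 2 - 1) / 2 := by
      have h1 : (2 * (n + 1) + (m + 2)) * (m + 2 - 1)
          = (2 * n + (m + 2)) * (m + 2 - 1) + (m + 1) * 2 := by ring_nf; omega
      rw [h1, Nat.add_mul_div_right _ _ (by norm_num : 0 < 2)]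
      omega
    rw [hexp]
    simp
    rw [pow_add, pow_succ]
    ring
end

section
/- In the formal power series ring ℤ[[x]], the identity (1 - x) / (1 - x^k - x^{k+ℓ-1} + x^{k+ℓ}) = 1 / ((x^k-1)/(x-1) - x^{k+ℓ-1}) holds, and the coefficient of x^{ℓ-1} in (1-x)/(1 - x^k - x^{k+ℓ-1} + x^{k+ℓ}) equals 1 if k divides ℓ-1, equals -1 if k divides ℓ-2, and equals 0 otherwise. -/
open PowerSeries in
theorem series_identity_and_coeff (k l : ℕ) (hk : 2 ≤ k) (hl : 2 ≤ l) :
    (1 - X) * Ring.inverse (1 - X ^ k - X ^ (k + l - 1) + X ^ (k + l) : ℤ⟦X⟧)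
      = Ring.inverse ((∑ i ∈ Finset.range k, X ^ i) - X ^ (k + l - 1) : ℤ⟦X⟧) ∧
    coeff (l - 1)
        ((1 - X) * Ring.inverse (1 - X ^ k - X ^ (k + l - 1) + X ^ (k + l) : ℤ⟦X⟧))
      = if k ∣ l - 1 then 1 else if k ∣ l - 2 then -1 else 0 := by
  set m := k + l - 1 with hm
  set A : ℤ⟦X⟧ := 1 - X ^ k - X ^ m + X ^ (k + l) with hA
  set C : ℤ⟦X⟧ := ∑ i ∈ Finset.range k, X ^ i with hC
  set B : ℤ⟦X⟧ := C - X ^ m with hB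
  have hk0 : k ≠ 0 := by omega
  have hm0 : m ≠ 0 := by omega
  have hCgeom : (1 - X) * C = 1 - X ^ k := by
    have h2 : C * (X - 1) = X ^ k - 1 := geom_sum_mul (X : ℤ⟦X⟧) k
    have h3 : (1 - X) * C = -(C * (X - 1)) := by ring
    rw [h3, h2]; ring
  -- A = (1 - X) * B
  have hfac : A = (1 - X) * B := by
    have hml : m + 1 = k + l := by omega
    calc A = (1 - X ^ k) - (X ^ m - X ^ (k + l)) := by rw [hA]; ring
      _ = (1 - X) * C - (X ^ m - X ^ m * X) := by
          rw [hCgeom, ← pow_succ, hml]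
      _ = (1 - X) * B := by rw [hB]; ring
  -- units
  have hconst : ∀ n : ℕ, n ≠ 0 → constantCoeff ((X : ℤ⟦X⟧) ^ n) = 0 := by
    intro n hn
    simp [PowerSeries.constantCoeff_X, zero_pow hn]
  have hCc : constantCoeff C = 1 := by
    rw [hC, map_sum, Finset.sum_eq_single 0]
    · simp
    · intro i _ hi0; exact hconst i hi0
    · intro h; simp at h; omega
  have hBu : IsUnit B := by
    rw [PowerSeries.isUnit_iff_constantCoeff]
    rw [hB, map_sub, hCc, hconst m hm0]
    simp
  have h1Xu : IsUnit (1 - X : ℤ⟦X⟧) := by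
    rw [PowerSeries.isUnit_iff_constantCoeff]
    simp [PowerSeries.constantCoeff_X]
  have hAu : IsUnit A := by rw [hfac]; exact h1Xu.mul hBu
  -- part 1
  have part1 : (1 - X) * Ring.inverse A = Ring.inverse B := by
    have h1 : ((1 - X) * Ring.inverse A) * B = 1 := by
      have h4 : (1 - X) * Ring.inverse A * B = Ring.inverse A * A := by
        rw [hfac]; ring
      rw [h4, Ring.inverse_mul_cancel A hAu]
    calc (1 - X) * Ring.inverse A
        = ((1 - X) * Ring.inverse A) * (B * Ring.inverse B) := by
          rw [Ring.mul_inverse_cancel B hBu, mul_one]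
      _ = (((1 - X) * Ring.inverse A) * B) * Ring.inverse B := by ring
      _ = Ring.inverse B := by rw [h1, one_mul]
  refine ⟨part1, ?_⟩
  rw [part1]
  -- inverse of 1 - X^k
  set E : ℤ⟦X⟧ := PowerSeries.mk (fun n => if k ∣ n then (1 : ℤ) else 0) with hE
  have hEmul : (1 - X ^ k) * E = 1 := by
    ext n
    rw [sub_mul, one_mul, map_sub]
    rcases lt_or_ge n k with h | h
    · rw [PowerSeries.coeff_X_pow_mul' E k n, if_neg (by omega)]
      rcases Nat.eq_zero_or_pos n with rfl | hn
      · simp [hE, PowerSeries.coeff_mk]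
      · have hnd : ¬ k ∣ n := fun hd => by
          have := Nat.le_of_dvd hn hd; omega
        simp only [hE, PowerSeries.coeff_mk, hnd, if_false, PowerSeries.coeff_one, sub_zero]
        rw [if_neg (by omega)]
    · obtain ⟨d, rfl⟩ : ∃ d, n = d + k := ⟨n - k, by omega⟩
      rw [PowerSeries.coeff_X_pow_mul E k d]
      have hdvd : k ∣ d + k ↔ k ∣ d := Nat.dvd_add_self_right
      simp [hE, PowerSeries.coeff_mk, hdvd, PowerSeries.coeff_one, hk0]
  -- C * ((1-X)*E) = 1
  set CInv : ℤ⟦X⟧ := (1 - X) * E with hCInv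
  have hCmul : C * CInv = 1 := by
    have : C * CInv = ((1 - X) * C) * E := by rw [hCInv]; ring
    rw [this, hCgeom, hEmul]
  -- Ring.inverse B = CInv + X^m * w
  have hiBB : Ring.inverse B * B = 1 := Ring.inverse_mul_cancel B hBu
  have key : Ring.inverse B = CInv + X ^ m * (CInv * Ring.inverse B) := by
    have h5 : Ring.inverse B * C = 1 + X ^ m * Ring.inverse B := by
      have : Ring.inverse B * C = Ring.inverse B * B + X ^ m * Ring.inverse B := by
        rw [hB]; ring
      rw [this, hiBB]
    calc Ring.inverse B = (C * CInv) * Ring.inverse B := by rw [hCmul, one_mul]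
      _ = CInv * (Ring.inverse B * C) := by ring
      _ = CInv * (1 + X ^ m * Ring.inverse B) := by rw [h5]
      _ = CInv + X ^ m * (CInv * Ring.inverse B) := by ring
  rw [key, map_add]
  rw [PowerSeries.coeff_X_pow_mul' _ m (l - 1), if_neg (by omega), add_zero]
  -- coeff of CInv
  have hl1 : l - 1 = (l - 2) + 1 := by omega
  have hcoeff : coeff (l - 1) CInv
      = (if k ∣ l - 1 then (1 : ℤ) else 0) - (if k ∣ l - 2 then (1 : ℤ) else 0) := by
    rw [hCInv, sub_mul, one_mul, map_sub, hl1, PowerSeries.coeff_succ_X_mul]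
    simp [hE, PowerSeries.coeff_mk, ← hl1]
  rw [hcoeff]
  by_cases h1 : k ∣ l - 1
  · have h2 : ¬ k ∣ l - 2 := by
      intro h2
      have : k ∣ (l - 1) - (l - 2) := Nat.dvd_sub h1 h2
      have h6 : k ∣ 1 := by simpa [(by omega : l - 1 - (l - 2) = 1)] using this
      have := Nat.le_of_dvd one_pos h6
      omega
    simp [h1, h2]
  · by_cases h2 : k ∣ l - 2 <;> simp [h1, h2]
end

section
/- Let k, ℓ ≥ 2 and let r_1, …, r_{k+ℓ-1} be the complex roots of g_{k,ℓ}(x) = x^{k+ℓ-1} - (1+x+⋯+x^{k-1}) counted with multiplicity (all nonzero since g_{k,ℓ}(0) = -1). Then ∏_{j=1}^{k+ℓ-1} (r_j^ℓ - 1)/(r_j (r_j - 1)) equals (-1)^{(k+ℓ)ℓ} if gcd(ℓ, k-1) = 1, and equals 0 if gcd(ℓ, k-1) > 1. -/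
open Polynomial

private lemma eval_eq_prod_roots_aux {p : ℂ[X]} (hp : p.Monic) (a : ℂ) :
    p.eval a = (p.roots.map fun r => a - r).prod := by
  conv_lhs => rw [(IsAlgClosed.splits p).eq_prod_roots_of_monic hp]
  rw [eval_multiset_prod, Multiset.map_map]
  simp

private lemma card_roots_aux {p : ℂ[X]} :
    Multiset.card p.roots = p.natDegree :=
  (splits_iff_card_roots).mp (IsAlgClosed.splits p)

private lemma pow_inj_aux {l m : ℕ} (hl : l ≠ 0) (hco : Nat.Coprime m l)
    {x y : ℂ} (hx : x ^ l = 1) (hy : y ^ l = 1) (h : x ^ m = y ^ m) : x = y := by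
  have hx0 : x ≠ 0 := by rintro rfl; rw [zero_pow hl] at hx; exact zero_ne_one hx
  have hy0 : y ≠ 0 := by rintro rfl; rw [zero_pow hl] at hy; exact zero_ne_one hy
  have hbz : (m : ℤ) * Nat.gcdA m l + (l : ℤ) * Nat.gcdB m l = 1 := by
    have h1 : ((Nat.gcd m l : ℕ) : ℤ) = 1 := by rw [hco]; norm_num
    rw [Nat.gcd_eq_gcd_ab] at h1
    linarith
  have key : ∀ w : ℂ, w ≠ 0 → w = (w ^ m) ^ Nat.gcdA m l * (w ^ l) ^ Nat.gcdB m l := by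
    intro w hw0
    calc w = w ^ (1 : ℤ) := (zpow_one w).symm
      _ = w ^ ((m : ℤ) * Nat.gcdA m l + (l : ℤ) * Nat.gcdB m l) := by rw [hbz]
      _ = (w ^ (m : ℤ)) ^ Nat.gcdA m l * (w ^ (l : ℤ)) ^ Nat.gcdB m l := by
          rw [zpow_add₀ hw0, zpow_mul, zpow_mul]
      _ = (w ^ m) ^ Nat.gcdA m l * (w ^ l) ^ Nat.gcdB m l := by
          rw [zpow_natCast, zpow_natCast]
  rw [key x hx0, key y hy0, hx, hy, h]

private lemma prod_map_neg_aux (m : Multiset ℂ) :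
    (m.map fun a => -a).prod = (-1) ^ Multiset.card m * m.prod := by
  induction m using Multiset.induction_on with
  | empty => simp
  | cons a s ih => simp [ih]; ring

open Polynomial in
theorem prod_over_roots (k l : ℕ) (hk : 2 ≤ k) (hl : 2 ≤ l)
    (g : ℂ[X]) (hg : g = X ^ (k + l - 1) - ∑ j ∈ Finset.range k, X ^ j) :
    (g.roots.map fun r => (r ^ l - 1) / (r * (r - 1))).prod
      = if Nat.gcd l (k - 1) = 1 then (-1 : ℂ) ^ ((k + l) * l) else 0 := by
  have hl0 : (l : ℂ) ≠ 0 := Nat.cast_ne_zero.mpr (by omega)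
  -- g is monic of degree k + l - 1
  have hsdeg : (∑ j ∈ Finset.range k, (X : ℂ[X]) ^ j).natDegree ≤ k - 1 :=
    natDegree_sum_le_of_forall_le _ _ fun j hj => by
      rw [natDegree_X_pow]; exact Nat.le_sub_one_of_lt (Finset.mem_range.mp hj)
  have hmg : g.Monic := by
    rw [hg]
    apply monic_X_pow_sub
    refine lt_of_le_of_lt (degree_le_of_natDegree_le hsdeg) ?_
    exact_mod_cast Nat.cast_lt.mpr (show k - 1 < k + l - 1 by omega)
  have hdg : g.natDegree = k + l - 1 := by
    rw [hg, natDegree_sub_eq_left_of_natDegree_lt, natDegree_X_pow]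
    rw [natDegree_X_pow]
    omega

  -- eval of g
  have hevalg : ∀ a : ℂ, g.eval a = a ^ (k + l - 1) - ∑ j ∈ Finset.range k, a ^ j := by
    intro a; rw [hg]; simp [eval_finset_sum]
  have hg0 : g.eval 0 = -1 := by
    rw [hevalg]
    rw [Finset.sum_eq_single 0 (fun j _ hj => zero_pow hj) (fun h => absurd (Finset.mem_range.mpr (by omega)) h)]
    rw [zero_pow (by omega), pow_zero]
    ring
  have hg1 : g.eval 1 = 1 - (k : ℂ) := by
    rw [hevalg]; simp
  have hgne : g ≠ 0 := hmg.ne_zero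
  have hroots : ∀ r ∈ g.roots, r ≠ 0 ∧ r ≠ 1 := by
    intro r hr
    have hr' : g.eval r = 0 := (mem_roots hgne).mp hr
    constructor
    · rintro rfl; rw [hg0] at hr'; norm_num at hr'
    · rintro rfl; rw [hg1] at hr'
      have : (k : ℂ) = 1 := by linear_combination -hr'
      have : (k : ℂ) ≠ 1 := by exact_mod_cast (by omega : (k : ℕ) ≠ 1)
      simp_all
  -- the geometric-sum polynomial q
  set q : ℂ[X] := ∑ i ∈ Finset.range l, X ^ i with hq
  have hmq : q.Monic := monic_geom_sum_X (by omega)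
  have hevalq : ∀ a : ℂ, q.eval a = ∑ i ∈ Finset.range l, a ^ i := by
    intro a; rw [hq]; simp [eval_finset_sum]
  have hkey : ∀ x : ℂ, q.eval x * (x - 1) = x ^ l - 1 := by
    intro x; rw [hevalq]; exact geom_sum_mul x l
  have hq1 : q.eval 1 = (l : ℂ) := by
    rw [hevalq]; simp
  have hdq : q.natDegree = l - 1 := by
    have h1 : q = (∑ i ∈ Finset.range (l - 1), (X : ℂ[X]) ^ i) + X ^ (l - 1) := by
      rw [hq, ← Finset.sum_range_succ, Nat.sub_add_cancel (by omega : 1 ≤ l)]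
    rw [h1, natDegree_add_eq_right_of_natDegree_lt, natDegree_X_pow]
    rw [natDegree_X_pow]
    calc (∑ i ∈ Finset.range (l-1), (X : ℂ[X]) ^ i).natDegree ≤ l - 2 :=
          natDegree_sum_le_of_forall_le _ _ fun j hj => by
            rw [natDegree_X_pow]
            have := Finset.mem_range.mp hj; omega
      _ < l - 1 := by omega
  have hqmem : ∀ z : ℂ, z ∈ q.roots ↔ z ^ l = 1 ∧ z ≠ 1 := by
    intro z
    rw [mem_roots hmq.ne_zero]
    constructor
    · intro hz
      rw [IsRoot] at hz
      have hz1 : z ≠ 1 := by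
        rintro rfl
        rw [hq1] at hz
        exact hl0 hz
      have := hkey z
      rw [hz, zero_mul] at this
      exact ⟨by linear_combination -this, hz1⟩
    · rintro ⟨h1, h2⟩
      rw [IsRoot]
      have := hkey z
      rw [h1, sub_self] at this
      exact (mul_eq_zero.mp this).resolve_right (sub_ne_zero.mpr h2)
  by_cases hgcd : Nat.gcd l (k - 1) = 1
  · -- coprime case
    rw [if_pos hgcd]
    set n := k + l - 1 with hn
    -- rewrite each factor as q.eval r * r⁻¹
    have hfac : ∀ r ∈ g.roots, (r ^ l - 1) / (r * (r - 1)) = q.eval r * r⁻¹ := by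
      intro r hr
      obtain ⟨hr0, hr1⟩ := hroots r hr
      have hr1' : r - 1 ≠ 0 := sub_ne_zero.mpr hr1
      rw [← hkey r]
      field_simp
    rw [Multiset.map_congr rfl hfac, Multiset.prod_map_mul]
    have hcardg : Multiset.card g.roots = n := by rw [card_roots_aux, hdg]
    have hcardq : Multiset.card q.roots = l - 1 := by rw [card_roots_aux, hdq]
    -- the product of roots of g
    have hprod : g.roots.prod = (-1 : ℂ) ^ (k + l) := by
      have h1 : (g.roots.map fun r => 0 - r) = g.roots.map fun r => -r := by
        apply Multiset.map_congr rfl; intro r _; ring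
      have h0 : (-1 : ℂ) = (-1) ^ n * g.roots.prod := by
        have h2 := eval_eq_prod_roots_aux hmg 0
        rw [hg0, h1, prod_map_neg_aux, hcardg] at h2
        exact h2
      have hsq : (-1 : ℂ) ^ n * (-1 : ℂ) ^ n = 1 := by
        rw [← pow_add]; exact Even.neg_one_pow ⟨n, by ring⟩
      have hkl : (-1 : ℂ) ^ (k + l) = -(-1 : ℂ) ^ n := by
        rw [(by omega : k + l = n + 1), pow_succ]; ring
      rw [hkl]
      linear_combination (-(-1 : ℂ) ^ n) * h0 - g.roots.prod * hsq
    have hA : (g.roots.map fun r => r⁻¹).prod = (-1 : ℂ) ^ (k + l) := by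
      rw [Multiset.prod_map_inv, Multiset.map_id', hprod, ← inv_pow, inv_neg, inv_one]
    -- the product of q.eval over roots of g
    have hB : (g.roots.map fun r => q.eval r).prod
        = (-1 : ℂ) ^ (n * (l - 1)) * (q.roots.map fun z => g.eval z).prod := by
      have h1 : (g.roots.map fun r => q.eval r).prod
          = (g.roots.map fun r => (q.roots.map fun z => r - z).prod).prod := by
        apply congrArg
        exact Multiset.map_congr rfl fun r _ => eval_eq_prod_roots_aux hmq r
      rw [h1, Multiset.prod_map_prod_map]
      have h2 : ∀ z ∈ q.roots, (g.roots.map fun r => r - z).prod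
          = (-1 : ℂ) ^ n * g.eval z := by
        intro z _
        have h3 : (g.roots.map fun r => r - z) = (g.roots.map fun r => z - r).map fun w => -w := by
          rw [Multiset.map_map]
          apply Multiset.map_congr rfl
          intro r _; simp
        rw [h3, prod_map_neg_aux, Multiset.card_map, hcardg,
          ← eval_eq_prod_roots_aux hmg z]
      rw [Multiset.map_congr rfl h2, Multiset.prod_map_mul]
      congr 1
      rw [Multiset.map_const', Multiset.prod_replicate, ← pow_mul, hcardq]
    -- evaluate g at roots of unity
    have hgz : ∀ z ∈ q.roots, g.eval z * (z - 1) = 1 - z ^ (k - 1) := by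
      intro z hz
      obtain ⟨hzl, hz1⟩ := (hqmem z).mp hz
      have hzn : z ^ (k + l - 1) = z ^ (k - 1) := by
        rw [(by omega : k + l - 1 = (k - 1) + l), pow_add, hzl, mul_one]
      have hsum : (∑ j ∈ Finset.range k, z ^ j) * (z - 1) = z ^ k - 1 := geom_sum_mul z k
      have hzk : z ^ k = z ^ (k - 1) * z := by
        rw [← pow_succ]; congr 1; omega
      rw [hevalg, hzn, sub_mul, hsum, hzk]
      ring
    -- the permutation of roots of q under z ↦ z^(k-1)
    have hco : Nat.Coprime (k - 1) l := Nat.coprime_comm.mp hgcd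
    have hnodup : q.roots.Nodup := by
      apply nodup_roots
      apply Separable.of_dvd (separable_X_pow_sub_C (1 : ℂ) hl0 one_ne_zero)
      refine ⟨X - 1, ?_⟩
      rw [C_1, ← geom_sum_mul (X : ℂ[X]) l, hq]
    have hmemmap : ∀ z ∈ q.roots, z ^ (k - 1) ∈ q.roots := by
      intro z hz
      obtain ⟨hzl, hz1⟩ := (hqmem z).mp hz
      refine (hqmem _).mpr ⟨?_, ?_⟩
      · rw [← pow_mul, mul_comm, pow_mul, hzl, one_pow]
      · intro hcon
        exact hz1 (pow_inj_aux (by omega) hco hzl (one_pow l) (by rw [hcon, one_pow]))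
    have hperm : q.roots.map (fun z => z ^ (k - 1)) = q.roots := by
      apply Multiset.eq_of_le_of_card_le
      · rw [Multiset.le_iff_subset]
        · intro x hx
          obtain ⟨z, hz, rfl⟩ := Multiset.mem_map.mp hx
          exact hmemmap z hz
        · apply Multiset.Nodup.map_on _ hnodup
          intro x hx y hy hxy
          exact pow_inj_aux (by omega) hco ((hqmem x).mp hx).1 ((hqmem y).mp hy).1 hxy
      · rw [Multiset.card_map]
    -- product of (1 - z^(k-1))
    have hq1prod : (q.roots.map fun z => 1 - z).prod = (l : ℂ) := by
      rw [← eval_eq_prod_roots_aux hmq 1, hq1]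
    have hE : (q.roots.map fun z => 1 - z ^ (k - 1)).prod = (l : ℂ) := by
      have : (q.roots.map fun z => 1 - z ^ (k - 1))
          = (q.roots.map fun z => z ^ (k - 1)).map (fun w => 1 - w) := by
        rw [Multiset.map_map]; rfl
      rw [this, hperm, hq1prod]
    -- product of (z - 1)
    have hD : (q.roots.map fun z => z - 1).prod = (-1 : ℂ) ^ (l - 1) * l := by
      have h3 : (q.roots.map fun z => z - 1) = (q.roots.map fun z => 1 - z).map fun w => -w := by
        rw [Multiset.map_map]
        apply Multiset.map_congr rfl
        intro z _; simp
      rw [h3, prod_map_neg_aux, Multiset.card_map, hcardq, hq1prod]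
    -- product of g.eval over roots of q
    have hC : (q.roots.map fun z => g.eval z).prod = (-1 : ℂ) ^ (l - 1) := by
      have h1 : ((q.roots.map fun z => g.eval z).prod) * ((q.roots.map fun z => z - 1).prod)
          = (l : ℂ) := by
        rw [← Multiset.prod_map_mul, Multiset.map_congr rfl hgz, hE]
      rw [hD] at h1
      have hsq : ((-1 : ℂ) ^ (l - 1)) * ((-1 : ℂ) ^ (l - 1)) = 1 := by
        rw [← pow_add]; exact Even.neg_one_pow ⟨l - 1, by ring⟩
      have hinv : (l : ℂ) * (l : ℂ)⁻¹ = 1 := mul_inv_cancel₀ hl0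
      have h3 : (q.roots.map fun z => g.eval z).prod
            * (((-1 : ℂ) ^ (l - 1) * (-1 : ℂ) ^ (l - 1)) * ((l : ℂ) * (l : ℂ)⁻¹))
          = (-1 : ℂ) ^ (l - 1) * ((l : ℂ) * (l : ℂ)⁻¹) := by
        linear_combination ((-1 : ℂ) ^ (l - 1) * (l : ℂ)⁻¹) * h1
      rw [hsq, hinv] at h3
      simpa using h3
    rw [hB, hC, hA, ← pow_add, ← pow_add]
    congr 1
    have h1 : n * (l - 1) + (l - 1) = (k + l) * (l - 1) := by
      rw [← Nat.succ_mul]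
      congr 1
      omega
    rw [h1, ← Nat.mul_succ]
    congr 1
    omega
  · -- non-coprime case: some root of unity is a root of g
    rw [if_neg hgcd]
    set d := Nat.gcd l (k - 1) with hd
    have hd2 : 2 ≤ d := by
      have : d ≠ 0 := by
        rw [hd]; intro h; exact absurd (Nat.eq_zero_of_gcd_eq_zero_left h) (by omega)
      omega
    obtain ⟨z, hzprim⟩ : ∃ z : ℂ, IsPrimitiveRoot z d :=
      ⟨_, Complex.isPrimitiveRoot_exp d (by omega)⟩
    have hzd : z ^ d = 1 := hzprim.pow_eq_one
    have hz1 : z ≠ 1 := hzprim.ne_one (by omega)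
    have hzl : z ^ l = 1 := by
      obtain ⟨c, hc⟩ := Nat.gcd_dvd_left l (k - 1)
      rw [← hd] at hc
      rw [hc, pow_mul, hzd, one_pow]
    have hzk1 : z ^ (k - 1) = 1 := by
      obtain ⟨c, hc⟩ := Nat.gcd_dvd_right l (k - 1)
      rw [← hd] at hc
      rw [hc, pow_mul, hzd, one_pow]
    have hzroot : g.eval z = 0 := by
      rw [hevalg]
      have h1 : z ^ (k + l - 1) = 1 := by
        rw [(by omega : k + l - 1 = (k - 1) + l), pow_add, hzk1, hzl, mul_one]
      have h2 : (∑ j ∈ Finset.range k, z ^ j) = 1 := by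
        rw [geom_sum_eq hz1]
        have hzk : z ^ k = z := by
          rw [(by omega : k = (k - 1) + 1), pow_succ, hzk1, one_mul]
        rw [hzk, div_self (sub_ne_zero.mpr hz1)]
      rw [h1, h2, sub_self]
    have hzmem : z ∈ g.roots := (mem_roots hgne).mpr hzroot
    apply Multiset.prod_eq_zero
    rw [Multiset.mem_map]
    exact ⟨z, hzmem, by rw [hzl, sub_self, zero_div]⟩
end

section
/- For integers k, ℓ ≥ 2 and every j ≥ 1, det(Ã_{j,k,ℓ}) = (-1)^{k+ℓ-2} · det(Ã_{j-1,k,ℓ}); consequently det(Ã_{j,k,ℓ}) = (-1)^{j(k+ℓ-2)} · det(Ã_{0,k,ℓ}) for all j ≥ 0. -/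
private lemma cycleRange_val_of_lt : ∀ {n : ℕ} {i p : Fin n}, p < i →
    ((i.cycleRange p : Fin n) : ℕ) = (p : ℕ) + 1
  | _ + 1, _, _, h => Fin.coe_cycleRange_of_lt h

private lemma cycleRange_val_self : ∀ {n : ℕ} (i : Fin n),
    ((i.cycleRange i : Fin n) : ℕ) = 0
  | _ + 1, i => by rw [Fin.cycleRange_self]; rfl

set_option maxHeartbeats 1000000 in
theorem det_shift (k l : ℕ) (hk : 2 ≤ k) (hl : 2 ≤ l) (C : ℕ → ℤ)
    (hC0 : C 0 = 1)
    (hC1 : ∀ n, 1 ≤ n → n ≤ k - 1 → C n = 0)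
    (hC2 : ∀ n, k ≤ n → n ≤ k + l - 2 → C n = 1)
    (hrec : ∀ n, k + l - 1 ≤ n → C n = ∑ m ∈ Finset.Icc l (k + l - 1), C (n - m))
    (A : ℕ → Matrix (Fin (k + l - 1)) (Fin (k + l - 1)) ℤ)
    (hA : ∀ j, A j = Matrix.of fun i c : Fin (k + l - 1) =>
      if (c : ℕ) = 0 then C (j + (i : ℕ)) else C (j + (i : ℕ) + l + (c : ℕ) - 1)) :
    (∀ j, 1 ≤ j → (A j).det = (-1) ^ (k + l - 2) * (A (j - 1)).det) ∧
      (∀ j, (A j).det = (-1) ^ (j * (k + l - 2)) * (A 0).det) := by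
  -- the key recurrence in summed form
  have key : ∀ b : ℕ, C (b + (k + l - 1)) = ∑ t ∈ Finset.range k, C (b + t) := by
    intro b
    rw [hrec _ (by omega)]
    refine Finset.sum_nbij' (fun m => k + l - 1 - m) (fun t => k + l - 1 - t)
      ?_ ?_ ?_ ?_ ?_
    · intro a ha; simp only [Finset.mem_Icc] at ha; simp only [Finset.mem_range]; (try dsimp only); omega
    · intro a ha; simp only [Finset.mem_range] at ha; simp only [Finset.mem_Icc]; (try dsimp only); omega
    · intro a ha; simp only [Finset.mem_Icc] at ha; omega
    · intro a ha; simp only [Finset.mem_range] at ha; omega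
    · intro a ha; simp only [Finset.mem_Icc] at ha; congr 1; omega
  have part1 : ∀ j, 1 ≤ j → (A j).det = (-1) ^ (k + l - 2) * (A (j - 1)).det := by
    intro j hj
    set e : Fin (k + l - 1) := ⟨k + l - 2, by omega⟩ with he
    have hev : (e : ℕ) = k + l - 2 := rfl
    set σ := e.cycleRange with hσ
    set M := (A (j - 1)).submatrix σ id with hM
    have hMrow : ∀ p, M p = A (j - 1) (σ p) := fun p => rfl
    have hσlt : ∀ p : Fin (k + l - 1), (p : ℕ) < k + l - 2 → ((σ p : Fin _) : ℕ) = (p : ℕ) + 1 := by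
      intro p hp
      exact cycleRange_val_of_lt (by exact hp)
    have hσe : ((σ e : Fin _) : ℕ) = 0 := cycleRange_val_self e
    -- the coefficient vector
    set c : Fin (k + l - 1) → ℤ :=
      fun p => if (p : ℕ) = k + l - 2 ∨ (p : ℕ) ≤ k - 2 then 1 else 0 with hc
    -- A j is M with row e replaced by a linear combination of rows of M
    have hupdate : A j = M.updateRow e (∑ p, c p • M p) := by
      -- first compute the combination: it is the sum of rows 0..k-1 of A (j-1)
      have hcomb : (∑ p, c p • M p) =
          ∑ t ∈ Finset.range k, (A (j - 1)) ⟨t % (k + l - 1), Nat.mod_lt _ (by omega)⟩ := by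
        have hfil : (∑ p, c p • M p) =
            ∑ p ∈ Finset.univ.filter
              (fun p : Fin (k + l - 1) => (p : ℕ) = k + l - 2 ∨ (p : ℕ) ≤ k - 2), M p := by
          erw [Finset.sum_filter]
          refine Finset.sum_congr rfl fun p _ => ?_
          by_cases h : (p : ℕ) = k + l - 2 ∨ (p : ℕ) ≤ k - 2 <;> simp [hc, h]
        rw [hfil]
        refine Finset.sum_nbij'
          (fun p : Fin (k + l - 1) => if (p : ℕ) = k + l - 2 then 0 else (p : ℕ) + 1)
          (fun t : ℕ => if t = 0 then e else ⟨min (t - 1) (k + l - 2), by omega⟩) ?_ ?_ ?_ ?_ ?_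
        · intro p hp
          simp only [Finset.mem_filter, Finset.mem_univ, true_and] at hp
          simp only [Finset.mem_range]
          (try dsimp only)
          rcases hp with h | h
          · rw [if_pos h]; omega
          · rw [if_neg (by omega)]; omega
        · intro t ht
          simp only [Finset.mem_range] at ht
          simp only [Finset.mem_filter, Finset.mem_univ, true_and]
          (try dsimp only)
          by_cases h : t = 0
          · rw [if_pos h]; left; exact hev
          · rw [if_neg h]; right; simp only [Fin.val_mk]; omega
        · intro p hp
          simp only [Finset.mem_filter, Finset.mem_univ, true_and] at hp
          (try dsimp only)
          rcases hp with h | h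
          · rw [if_pos h, if_pos rfl]
            exact Fin.ext (by rw [hev, h])
          · rw [if_neg (show ¬((p : ℕ) = k + l - 2) by omega),
              if_neg (show ¬((p : ℕ) + 1 = 0) by omega)]
            exact Fin.ext (by simp only [Fin.val_mk]; omega)
        · intro t ht
          simp only [Finset.mem_range] at ht
          (try dsimp only)
          by_cases h : t = 0
          · rw [if_pos h, if_pos hev]
            omega
          · rw [if_neg h, if_neg (by simp only [Fin.val_mk]; omega)]
            simp only [Fin.val_mk]; omega
        · intro p hp
          simp only [Finset.mem_filter, Finset.mem_univ, true_and] at hp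
          rw [hMrow]
          (try dsimp only)
          rcases hp with h | h
          · rw [if_pos h]
            have hpe : p = e := Fin.ext (by omega)
            have hs : σ p = ⟨0 % (k + l - 1), Nat.mod_lt _ (by omega)⟩ := by
              rw [hpe]
              refine Fin.ext ?_
              simp only [Fin.val_mk, Nat.zero_mod]
              exact hσe
            rw [hs]
          · rw [if_neg (by omega)]
            have hs : σ p = ⟨((p : ℕ) + 1) % (k + l - 1), Nat.mod_lt _ (by omega)⟩ := by
              refine Fin.ext ?_
              simp only [Fin.val_mk, Nat.mod_eq_of_lt (show (p : ℕ) + 1 < k + l - 1 by omega)]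
              exact hσlt p (by omega)
            rw [hs]
      rw [hcomb]
      ext i q
      by_cases hi : i = e
      · subst hi
        rw [Matrix.updateRow_self]
        simp only [Finset.sum_apply]
        rw [hA j]
        simp only [Matrix.of_apply]
        have hAentry : ∀ t, t < k →
            (A (j - 1)) ⟨t % (k + l - 1), Nat.mod_lt _ (by omega)⟩ q =
              if (q : ℕ) = 0 then C (j - 1 + t) else C (j - 1 + t + l + (q : ℕ) - 1) := by
          intro t ht
          rw [hA (j - 1)]
          simp only [Matrix.of_apply, Fin.val_mk, Nat.mod_eq_of_lt (show t < k + l - 1 by omega)]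
        by_cases hq : (q : ℕ) = 0
        · rw [if_pos hq]
          have h1 : j + (e : ℕ) = (j - 1) + (k + l - 1) := by omega
          rw [h1, key]
          refine Finset.sum_congr rfl fun t ht => ?_
          simp only [Finset.mem_range] at ht
          rw [hAentry t ht, if_pos hq]
        · rw [if_neg hq]
          have h1 : j + (e : ℕ) + l + (q : ℕ) - 1 = (j - 1 + l + (q : ℕ) - 1) + (k + l - 1) := by
            have := q.isLt; omega
          rw [h1, key]
          refine Finset.sum_congr rfl fun t ht => ?_
          simp only [Finset.mem_range] at ht
          rw [hAentry t ht, if_neg hq]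
          congr 1
          have := q.isLt
          omega
      · rw [Matrix.updateRow_ne hi]
        have hilt : (i : ℕ) < k + l - 2 := by
          have h1 := i.isLt
          rcases Nat.lt_or_ge (i : ℕ) (k + l - 2) with h | h
          · exact h
          · exact absurd (Fin.ext (by omega : (i : ℕ) = (e : ℕ))) hi
        rw [hMrow]
        rw [hA j, hA (j - 1)]
        simp only [Matrix.of_apply]
        rw [hσlt i hilt]
        by_cases hq : (q : ℕ) = 0
        · rw [if_pos hq, if_pos hq]; congr 1; omega
        · rw [if_neg hq, if_neg hq]; congr 1; have := q.isLt; omega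
    rw [hupdate, Matrix.det_updateRow_sum]
    have hce : c e = 1 := by simp [hc, he]
    rw [hce, one_smul, hM, Matrix.det_permute]
    congr 1
    rw [hσ, Fin.sign_cycleRange]
    simp [he]
  refine ⟨part1, ?_⟩
  intro j
  induction j with
  | zero => simp
  | succ n ih =>
    have := part1 (n + 1) (by omega)
    simp only [Nat.add_sub_cancel] at this
    rw [this, ih, ← mul_assoc, ← pow_add]
    congr 2
    ring
end

section
/- For integers k, ℓ ≥ 2, if k divides neither ℓ-1 nor ℓ-2, or if gcd(ℓ, k-1) > 1, then det(Ã_{0,k,ℓ}) = 0. -/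
private lemma pick_right {N : ℕ} (g : Fin N → ℤ) (m : ℕ) (hm : m < N) :
    (∑ c : Fin N, g c * (if (c : ℕ) = m then (1:ℤ) else 0)) = g ⟨m, hm⟩ := by
  rw [Finset.sum_eq_single (⟨m, hm⟩ : Fin N)]
  · simp
  · intro b _ hb
    have : (b : ℕ) ≠ m := fun h => hb (Fin.ext h)
    simp [this]
  · intro h; exact absurd (Finset.mem_univ _) h

private lemma pick_left {N : ℕ} (g : Fin N → ℤ) (m : ℕ) (hm : m < N) :
    (∑ i : Fin N, (if (i : ℕ) = m then (1:ℤ) else 0) * g i) = g ⟨m, hm⟩ := by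
  simp_rw [mul_comm]; exact pick_right g m hm

theorem det_case_zero (k l : ℕ) (hk : 2 ≤ k) (hl : 2 ≤ l) (C : ℕ → ℤ)
    (hC0 : C 0 = 1)
    (hC1 : ∀ n, 1 ≤ n → n ≤ k - 1 → C n = 0)
    (hC2 : ∀ n, k ≤ n → n ≤ k + l - 2 → C n = 1)
    (hrec : ∀ n, k + l - 1 ≤ n → C n = ∑ m ∈ Finset.Icc l (k + l - 1), C (n - m))
    (hcase : (¬ k ∣ l - 1 ∧ ¬ k ∣ l - 2) ∨ 1 < Nat.gcd l (k - 1))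
    (A : Matrix (Fin (k + l - 1)) (Fin (k + l - 1)) ℤ)
    (hA : A = Matrix.of fun i c : Fin (k + l - 1) =>
      if (c : ℕ) = 0 then C ((i : ℕ)) else C ((i : ℕ) + l + (c : ℕ) - 1)) :
    A.det = 0 := by
  have hrec' : ∀ a : ℕ, C (a + (k + l - 1)) = ∑ j ∈ Finset.range k, C (a + j) := by
    intro a
    have h := hrec (a + (k + l - 1)) (by omega)
    rw [h]
    have hIcc : Finset.Icc l (k + l - 1) = Finset.Ico l (k + l) := by
      rw [← Finset.Ico_add_one_right_eq_Icc]
      congr 1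
      omega
    rw [hIcc, Finset.sum_Ico_eq_sum_range]
    have hkl : k + l - l = k := by omega
    rw [hkl, ← Finset.sum_range_reflect (fun j => C (a + j)) k]
    apply Finset.sum_congr rfl
    intro i hi
    rw [Finset.mem_range] at hi
    congr 1
    omega
  -- shift lemma
  have hs : ∀ m : ℕ, (∑ j ∈ Finset.range k, C (m + 1 + j))
      = (∑ j ∈ Finset.range k, C (m + j)) + C (m + k) - C m := by
    intro m
    have h1 := Finset.sum_range_succ (fun j => C (m + j)) k
    have h2 := Finset.sum_range_succ' (fun j => C (m + j)) k
    simp only [add_zero] at h1 h2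
    have h3 : (∑ j ∈ Finset.range k, C (m + 1 + j)) = ∑ j ∈ Finset.range k, C (m + (j + 1)) := by
      apply Finset.sum_congr rfl; intro j _; congr 1; omega
    rw [h3]
    linarith [h1, h2]
  -- values of C on [0, k+l-1]
  have Cval : ∀ m : ℕ, m ≤ k + l - 1 → C m = if m = 0 ∨ k ≤ m then 1 else 0 := by
    intro m hm
    rcases Nat.eq_or_lt_of_le (Nat.zero_le m) with h0 | h0
    · simp [← h0, hC0]
    rcases lt_or_ge m k with hmk | hmk
    · rw [hC1 m (by omega) (by omega)]
      simp only [if_neg (by omega : ¬ (m = 0 ∨ k ≤ m))]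
    rcases lt_or_ge m (k + l - 1) with hm2 | hm2
    · rw [hC2 m hmk (by omega)]
      simp only [if_pos (by omega : m = 0 ∨ k ≤ m)]
    · have hme : m = k + l - 1 := by omega
      subst hme
      have := hrec' 0
      simp only [zero_add] at this
      rw [this]
      have h2 := Finset.sum_range_succ' (fun j => C j) (k - 1)
      have hkk : k - 1 + 1 = k := by omega
      rw [hkk] at h2
      rw [h2, hC0]
      have hz : (∑ j ∈ Finset.range (k-1), C (j + 1)) = 0 := by
        apply Finset.sum_eq_zero
        intro j hj
        rw [Finset.mem_range] at hj
        exact hC1 (j+1) (by omega) (by omega)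
      rw [hz]
      simp only [if_pos (by omega : k + l - 1 = 0 ∨ k ≤ k + l - 1)]
      ring
  have hAval : ∀ (i : Fin (k + l - 1)) (m : ℕ) (hm : m < k + l - 1), m ≠ 0 →
      A i ⟨m, hm⟩ = C ((i : ℕ) + l + m - 1) := by
    intro i m hm hm0
    rw [hA]
    simp only [Matrix.of_apply]
    exact if_neg hm0
  have hAval0 : ∀ (i : Fin (k + l - 1)) (hm : 0 < k + l - 1),
      A i ⟨0, hm⟩ = C (i : ℕ) := by
    intro i hm
    rw [hA]
    simp
  rcases hcase with ⟨hnd1, hnd2⟩ | hgcd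
  · -- Case B : k ∤ l-1 and k ∤ l-2
    have hl3 : 3 ≤ l := by
      by_contra h
      exact hnd2 (by have : l - 2 = 0 := by omega
                     rw [this]; exact dvd_zero k)
    set T := (l - 3) / k + 1 with hT
    have hdm := Nat.div_add_mod (l - 3) k
    have hmlt : (l - 3) % k < k := Nat.mod_lt _ (by omega)
    have hkT1 : l - 2 ≤ k * T := by
      have he : k * T = k * ((l - 3) / k) + k := by rw [hT]; ring
      omega
    have hkTne1 : k * T ≠ l - 2 := fun h => hnd2 ⟨T, h.symm⟩
    have hkTne2 : k * T ≠ l - 1 := fun h => hnd1 ⟨T, h.symm⟩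
    have hkTl : l ≤ k * T := by omega
    have hkTle : k * T ≤ k + l - 3 := by
      have h1 := Nat.div_mul_le_self (l - 3) k
      have h2 : k * T = (l - 3) / k * k + k := by rw [hT]; ring
      omega
    set v : Fin (k + l - 1) → ℤ := fun c =>
      (if (c : ℕ) = 0 then -1 else 0) + (if (c : ℕ) + l = k * T + 1 then 1 else 0)
      + ∑ t ∈ Finset.range T,
          ((if (c : ℕ) = k * (t + 1) then (1:ℤ) else 0)
            - (if (c : ℕ) = k * (t + 1) + 1 then 1 else 0)) with hv
    rw [← Matrix.exists_mulVec_eq_zero_iff]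
    refine ⟨v, ?_, ?_⟩
    · intro hv0
      have h0 := congr_fun hv0 ⟨0, by omega⟩
      rw [hv] at h0
      have e2 : ∀ t ∈ Finset.range T,
          ((if (0:ℕ) = k * (t + 1) then (1:ℤ) else 0)
            - (if (0:ℕ) = k * (t + 1) + 1 then 1 else 0)) = 0 := by
        intro t _
        have hk1 : k * (t + 1) ≠ 0 := by positivity
        rw [if_neg (by omega), if_neg (by omega)]
        ring
      simp only [Pi.zero_apply, Fin.val_mk] at h0
      rw [Finset.sum_eq_zero e2, if_neg (by omega : ¬ ((0:ℕ) + l = k * T + 1))] at h0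
      simp at h0
    · funext i
      rw [Matrix.mulVec, hv]
      simp only [dotProduct, Pi.zero_apply]
      have hsplit : ∀ c : Fin (k + l - 1),
          A i c * ((if (c : ℕ) = 0 then (-1:ℤ) else 0)
            + (if (c : ℕ) + l = k * T + 1 then 1 else 0)
            + ∑ t ∈ Finset.range T,
                ((if (c : ℕ) = k * (t + 1) then (1:ℤ) else 0)
                  - (if (c : ℕ) = k * (t + 1) + 1 then 1 else 0)))
          = A i c * (if (c : ℕ) = 0 then (-1:ℤ) else 0)
            + A i c * (if (c : ℕ) + l = k * T + 1 then 1 else 0)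
            + A i c * (∑ t ∈ Finset.range T,
                ((if (c : ℕ) = k * (t + 1) then (1:ℤ) else 0)
                  - (if (c : ℕ) = k * (t + 1) + 1 then 1 else 0))) := by
        intro c; ring
      rw [Finset.sum_congr rfl (fun c _ => hsplit c), Finset.sum_add_distrib,
        Finset.sum_add_distrib]
      -- piece 1
      have p1 : (∑ c : Fin (k + l - 1), A i c * (if (c : ℕ) = 0 then (-1:ℤ) else 0))
          = -(C (i : ℕ)) := by
        have : ∀ c : Fin (k + l - 1), A i c * (if (c : ℕ) = 0 then (-1:ℤ) else 0)
            = -(A i c * (if (c : ℕ) = 0 then 1 else 0)) := by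
          intro c; split <;> ring
        simp_rw [this]
        rw [Finset.sum_neg_distrib, pick_right (fun c => A i c) 0 (by omega)]
        rw [hAval0 i (by omega)]
      -- piece 2
      have p2 : (∑ c : Fin (k + l - 1), A i c * (if (c : ℕ) + l = k * T + 1 then (1:ℤ) else 0))
          = C ((i : ℕ) + k * T) := by
        have hiff : ∀ c : Fin (k + l - 1), ((c : ℕ) + l = k * T + 1) ↔ ((c : ℕ) = k * T + 1 - l) := by
          intro c; omega
        simp_rw [hiff]
        rw [pick_right (fun c => A i c) (k * T + 1 - l) (by omega)]
        rw [hAval i (k * T + 1 - l) (by omega) (by omega)]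
        congr 1
        omega
      -- piece 3
      have p3 : (∑ c : Fin (k + l - 1), A i c * (∑ t ∈ Finset.range T,
            ((if (c : ℕ) = k * (t + 1) then (1:ℤ) else 0)
              - (if (c : ℕ) = k * (t + 1) + 1 then 1 else 0))))
          = C (i : ℕ) - C ((i : ℕ) + k * T) := by
        simp_rw [Finset.mul_sum]
        rw [Finset.sum_comm]
        have pval : ∀ t ∈ Finset.range T,
            (∑ c : Fin (k + l - 1), A i c *
              ((if (c : ℕ) = k * (t + 1) then (1:ℤ) else 0)
                - (if (c : ℕ) = k * (t + 1) + 1 then 1 else 0)))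
            = C ((i : ℕ) + k * t) - C ((i : ℕ) + k * (t + 1)) := by
          intro t ht
          rw [Finset.mem_range] at ht
          simp_rw [mul_sub, Finset.sum_sub_distrib]
          have b1 : k * (t + 1) < k + l - 1 := by
            have : k * (t + 1) ≤ k * T := Nat.mul_le_mul_left k (by omega)
            omega
          have b2 : k * (t + 1) + 1 < k + l - 1 := by
            have : k * (t + 1) ≤ k * T := Nat.mul_le_mul_left k (by omega)
            omega
          rw [pick_right (fun c => A i c) (k * (t + 1)) b1,
              pick_right (fun c => A i c) (k * (t + 1) + 1) b2]
          rw [hAval i (k * (t + 1)) b1 (by positivity),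
              hAval i (k * (t + 1) + 1) b2 (by omega)]
          have e1 : (i : ℕ) + l + k * (t + 1) - 1 = ((i : ℕ) + k * t) + (k + l - 1) := by
            have : k * (t + 1) = k * t + k := by ring
            omega
          have e2 : (i : ℕ) + l + (k * (t + 1) + 1) - 1 = ((i : ℕ) + k * t + 1) + (k + l - 1) := by
            have : k * (t + 1) = k * t + k := by ring
            omega
          rw [e1, e2, hrec' ((i : ℕ) + k * t), hrec' ((i : ℕ) + k * t + 1)]
          have := hs ((i : ℕ) + k * t)
          have e3 : (i : ℕ) + k * (t + 1) = (i : ℕ) + k * t + k := by ring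
          rw [e3]
          linarith [this]
        rw [Finset.sum_congr rfl pval]
        rw [Finset.sum_range_sub' (fun t => C ((i : ℕ) + k * t)) T]
        simp
      rw [p1, p2, p3]
      ring
  · -- Case A : gcd l (k-1) > 1
    set d := Nat.gcd l (k - 1) with hd
    have hdl : d ∣ l := Nat.gcd_dvd_left _ _
    have hdk : d ∣ k - 1 := Nat.gcd_dvd_right _ _
    have hd2 : 2 ≤ d := hgcd
    have hdN : d ∣ (k + l - 1) := by
      have h1 := Nat.dvd_add hdk hdl
      have h2 : k - 1 + l = k + l - 1 := by omega
      rwa [h2] at h1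
    have hdlle : d ≤ l := Nat.le_of_dvd (by omega) hdl
    have hdkle : d ≤ k - 1 := Nat.le_of_dvd (by omega) hdk
    set M1 := (k + l - 1) / d with hM1d
    set M2 := (k - 1) / d with hM2d
    have hM1 : M1 * d = k + l - 1 := Nat.div_mul_cancel hdN
    have hM2 : M2 * d = k - 1 := Nat.div_mul_cancel hdk
    have hM2pos : 1 ≤ M2 := by
      by_contra h
      push_neg at h
      interval_cases M2
      rw [Nat.zero_mul] at hM2
      omega
    have hM2M1 : M2 < M1 := by
      by_contra h
      push_neg at h
      have := Nat.mul_le_mul_right d h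
      omega
    set D : ℕ → ℤ := fun n =>
      (∑ t ∈ Finset.range M1, (C (n + t * d + 1) - C (n + t * d)))
        - ∑ t ∈ Finset.range M2, C (n + t * d + 1) with hD
    -- generic telescoping shift
    have hshift : ∀ (M : ℕ) (h : ℕ → ℤ) (n : ℕ),
        (∑ t ∈ Finset.range M, h (n + d + t * d))
          = (∑ t ∈ Finset.range M, h (n + t * d)) + h (n + M * d) - h n := by
      intro M h n
      have h1 := Finset.sum_range_succ (fun t => h (n + t * d)) M
      have h2 := Finset.sum_range_succ' (fun t => h (n + t * d)) M
      simp only [Nat.zero_mul, Nat.add_zero] at h1 h2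
      have h3 : (∑ t ∈ Finset.range M, h (n + d + t * d))
          = ∑ t ∈ Finset.range M, h (n + (t + 1) * d) := by
        apply Finset.sum_congr rfl
        intro t _
        congr 1
        ring
      rw [h3]
      linarith [h1, h2]
    have hstep : ∀ n : ℕ, D (n + d) = D n := by
      intro n
      have A1 : (∑ t ∈ Finset.range M1, (C (n + d + t * d + 1) - C (n + d + t * d)))
          = (∑ t ∈ Finset.range M1, (C (n + t * d + 1) - C (n + t * d)))
            + (C (n + M1 * d + 1) - C (n + M1 * d)) - (C (n + 1) - C n) := by
        have := hshift M1 (fun m => C (m + 1) - C m) n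
        simpa using this
      have A2 : (∑ t ∈ Finset.range M2, C (n + d + t * d + 1))
          = (∑ t ∈ Finset.range M2, C (n + t * d + 1))
            + C (n + M2 * d + 1) - C (n + 1) := by
        have := hshift M2 (fun m => C (m + 1)) n
        simpa using this
      rw [hM1] at A1
      rw [hM2] at A2
      rw [show n + (k + l - 1) + 1 = n + 1 + (k + l - 1) by omega] at A1
      rw [show n + (k - 1) + 1 = n + k by omega] at A2
      rw [hD]
      simp only []
      have r1 := hrec' (n + 1)
      have r2 := hrec' n
      have r3 := hs n
      linarith [A1, A2, r1, r2, r3]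
    have hbase : ∀ j : ℕ, j < d → D j = 0 := by
      intro j hj
      rw [hD]
      simp only []
      have hS3 : (∑ t ∈ Finset.range M2, C (j + t * d + 1)) = 0 := by
        apply Finset.sum_eq_zero
        intro t ht
        rw [Finset.mem_range] at ht
        have htd : t * d ≤ (M2 - 1) * d := Nat.mul_le_mul_right d (by omega)
        have hub : (M2 - 1) * d = k - 1 - d := by
          have h5 : (M2 - 1) * d = M2 * d - d := by rw [Nat.sub_mul, one_mul]
          omega
        exact hC1 (j + t * d + 1) (by omega) (by omega)
      rw [hS3]
      rcases Nat.eq_zero_or_pos j with hj0 | hjpos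
      · subst hj0
        have hterm : ∀ t ∈ Finset.range M1, (C (0 + t * d + 1) - C (0 + t * d))
            = (if t = 0 then (-1:ℤ) else 0) + (if t = M2 then 1 else 0) := by
          intro t ht
          rw [Finset.mem_range] at ht
          have htd : t * d ≤ (M1 - 1) * d := Nat.mul_le_mul_right d (by omega)
          have hub : (M1 - 1) * d = k + l - 1 - d := by
            have h5 : (M1 - 1) * d = M1 * d - d := by rw [Nat.sub_mul, one_mul]
            omega
          by_cases ht0 : t = 0
          · subst ht0
            rw [if_pos rfl, if_neg (by omega : ¬ (0 = M2))]
            rw [Nat.zero_mul]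
            norm_num
            rw [hC1 1 le_rfl (by omega), hC0]
            ring
          · by_cases htM : t = M2
            · subst htM
              rw [if_neg ht0, if_pos rfl, hM2]
              rw [show (0:ℕ) + (k - 1) + 1 = k by omega, show (0:ℕ) + (k - 1) = k - 1 by omega]
              rw [hC2 k le_rfl (by omega), hC1 (k - 1) (by omega) (by omega)]
              ring
            · rw [if_neg ht0, if_neg htM]
              have hne : t * d ≠ k - 1 := by
                intro h
                apply htM
                have h6 : t * d = M2 * d := by omega
                exact Nat.eq_of_mul_eq_mul_right (by omega) h6
              have htdpos : 1 ≤ t * d := Nat.one_le_iff_ne_zero.mpr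
                (Nat.mul_ne_zero (by omega) (by omega))
              rw [Cval (0 + t * d + 1) (by omega), Cval (0 + t * d) (by omega)]
              have hiff : ((0 + t * d + 1 = 0) ∨ k ≤ 0 + t * d + 1)
                  ↔ ((0 + t * d = 0) ∨ k ≤ 0 + t * d) := by omega
              rw [if_congr hiff rfl rfl]
              ring
        rw [Finset.sum_congr rfl hterm, Finset.sum_add_distrib]
        rw [Finset.sum_ite_eq' (Finset.range M1) 0 (fun _ => (-1:ℤ)),
          Finset.sum_ite_eq' (Finset.range M1) M2 (fun _ => (1:ℤ))]
        rw [if_pos (Finset.mem_range.mpr (by omega)), if_pos (Finset.mem_range.mpr (by omega))]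
        ring
      · have hterm : ∀ t ∈ Finset.range M1, (C (j + t * d + 1) - C (j + t * d)) = 0 := by
          intro t ht
          rw [Finset.mem_range] at ht
          have htd : t * d ≤ (M1 - 1) * d := Nat.mul_le_mul_right d (by omega)
          have hub : (M1 - 1) * d = k + l - 1 - d := by
            have h5 : (M1 - 1) * d = M1 * d - d := by rw [Nat.sub_mul, one_mul]
            omega
          have hne : j + t * d ≠ k - 1 := by
            intro h
            have h3 : d ∣ j + t * d := h ▸ hdk
            have h4 : d ∣ t * d := dvd_mul_left d t
            have h5 : d ∣ j := (Nat.dvd_add_iff_left h4).2 h3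
            have := Nat.le_of_dvd hjpos h5
            omega
          rw [Cval (j + t * d + 1) (by omega), Cval (j + t * d) (by omega)]
          have hiff : ((j + t * d + 1 = 0) ∨ k ≤ j + t * d + 1)
              ↔ ((j + t * d = 0) ∨ k ≤ j + t * d) := by omega
          rw [if_congr hiff rfl rfl]
          ring
        rw [Finset.sum_eq_zero hterm]
        ring
    have hDzero : ∀ n : ℕ, D n = 0 := by
      intro n
      induction n using Nat.strong_induction_on with
      | _ n ih =>
        rcases lt_or_ge n d with h | h
        · exact hbase n h
        · have e : n - d + d = n := by omega
          rw [← e, hstep]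
          exact ih (n - d) (by omega)
    set u : Fin (k + l - 1) → ℤ := fun i =>
      (∑ t ∈ Finset.range M1,
        ((if (i : ℕ) = t * d + 1 then (1:ℤ) else 0) - (if (i : ℕ) = t * d then 1 else 0)))
        - ∑ t ∈ Finset.range M2, (if (i : ℕ) = t * d + 1 then 1 else 0) with hu
    have hkey : ∀ off : ℕ,
        (∑ i : Fin (k + l - 1), u i * C (off + (i : ℕ))) = D off := by
      intro off
      rw [hu, hD]
      simp only []
      have expand : ∀ i : Fin (k + l - 1),
          ((∑ t ∈ Finset.range M1,
              ((if (i : ℕ) = t * d + 1 then (1:ℤ) else 0) - (if (i : ℕ) = t * d then 1 else 0)))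
            - ∑ t ∈ Finset.range M2, (if (i : ℕ) = t * d + 1 then (1:ℤ) else 0))
            * C (off + (i : ℕ))
          = (∑ t ∈ Finset.range M1,
              ((if (i : ℕ) = t * d + 1 then (1:ℤ) else 0) * C (off + (i : ℕ))
                - (if (i : ℕ) = t * d then 1 else 0) * C (off + (i : ℕ))))
            - ∑ t ∈ Finset.range M2,
                (if (i : ℕ) = t * d + 1 then (1:ℤ) else 0) * C (off + (i : ℕ)) := by
        intro i
        rw [sub_mul, Finset.sum_mul, Finset.sum_mul]
        congr 1
        apply Finset.sum_congr rfl
        intro t _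
        rw [sub_mul]
      rw [Finset.sum_congr rfl (fun i _ => expand i), Finset.sum_sub_distrib]
      have q1 : ∀ t ∈ Finset.range M1,
          (∑ i : Fin (k + l - 1),
            ((if (i : ℕ) = t * d + 1 then (1:ℤ) else 0) * C (off + (i : ℕ))
              - (if (i : ℕ) = t * d then 1 else 0) * C (off + (i : ℕ))))
          = C (off + t * d + 1) - C (off + t * d) := by
        intro t ht
        rw [Finset.mem_range] at ht
        have htd : t * d ≤ (M1 - 1) * d := Nat.mul_le_mul_right d (by omega)
        have hub : (M1 - 1) * d = k + l - 1 - d := by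
          have h5 : (M1 - 1) * d = M1 * d - d := by rw [Nat.sub_mul, one_mul]
          omega
        rw [Finset.sum_sub_distrib]
        rw [pick_left (fun i : Fin (k + l - 1) => C (off + (i : ℕ))) (t * d + 1) (by omega),
          pick_left (fun i : Fin (k + l - 1) => C (off + (i : ℕ))) (t * d) (by omega)]
        rfl
      have q2 : ∀ t ∈ Finset.range M2,
          (∑ i : Fin (k + l - 1),
            (if (i : ℕ) = t * d + 1 then (1:ℤ) else 0) * C (off + (i : ℕ)))
          = C (off + t * d + 1) := by
        intro t ht
        rw [Finset.mem_range] at ht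
        have htd : t * d ≤ (M2 - 1) * d := Nat.mul_le_mul_right d (by omega)
        have hub : (M2 - 1) * d = k - 1 - d := by
          have h5 : (M2 - 1) * d = M2 * d - d := by rw [Nat.sub_mul, one_mul]
          omega
        rw [pick_left (fun i : Fin (k + l - 1) => C (off + (i : ℕ))) (t * d + 1) (by omega)]
        rfl
      congr 1
      · rw [Finset.sum_comm]
        exact Finset.sum_congr rfl q1
      · rw [Finset.sum_comm]
        exact Finset.sum_congr rfl q2
    rw [← Matrix.exists_vecMul_eq_zero_iff]
    refine ⟨u, ?_, ?_⟩
    · intro hu0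
      have h0 := congr_fun hu0 ⟨0, by omega⟩
      rw [hu] at h0
      simp only [Pi.zero_apply, Fin.val_mk] at h0
      have e1 : ∀ t ∈ Finset.range M1,
          ((if (0:ℕ) = t * d + 1 then (1:ℤ) else 0) - (if (0:ℕ) = t * d then 1 else 0))
          = (if t = 0 then (-1:ℤ) else 0) := by
        intro t _
        rw [if_neg (by omega)]
        by_cases h : t = 0
        · subst h
          rw [if_pos (by rw [Nat.zero_mul]), if_pos rfl]
          ring
        · rw [if_neg, if_neg h]
          · ring
          · have : 1 ≤ t * d := Nat.one_le_iff_ne_zero.mpr (Nat.mul_ne_zero h (by omega))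
            omega
      have e2 : ∀ t ∈ Finset.range M2, (if (0:ℕ) = t * d + 1 then (1:ℤ) else 0) = 0 := by
        intro t _
        rw [if_neg (by omega)]
      rw [Finset.sum_congr rfl e1, Finset.sum_eq_zero e2,
        Finset.sum_ite_eq' (Finset.range M1) 0 (fun _ => (-1:ℤ)),
        if_pos (Finset.mem_range.mpr (by omega))] at h0
      omega
    · funext c
      simp only [Matrix.vecMul, dotProduct, Pi.zero_apply]
      by_cases hc : (c : ℕ) = 0
      · have hval : ∀ i : Fin (k + l - 1), A i c = C (0 + (i : ℕ)) := by
          intro i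
          rw [hA]
          simp only [Matrix.of_apply, if_pos hc]
          rw [Nat.zero_add]
        rw [Finset.sum_congr rfl (fun i _ => by rw [hval i])]
        rw [hkey 0, hDzero 0]
      · have hval : ∀ i : Fin (k + l - 1), A i c = C ((l + (c : ℕ) - 1) + (i : ℕ)) := by
          intro i
          rw [hA]
          simp only [Matrix.of_apply, if_neg hc]
          congr 1
          omega
        rw [Finset.sum_congr rfl (fun i _ => by rw [hval i])]
        rw [hkey (l + (c : ℕ) - 1), hDzero]
end

section
/- Let k, ℓ ≥ 2 and let C : ℕ → ℤ be the dying-rabbit sequence with initial conditions C_0 = ⋯ = C_{ℓ-1} = 1 and C_n = C_{n-1} + C_{n-ℓ} for ℓ ≤ n ≤ k+ℓ-2, satisfying C_n = ∑_{m=ℓ}^{k+ℓ-1} C_{n-m} for n ≥ k+ℓ-1. Let C̃ be the sequence with the same recurrence and initial conditions C̃_0 = 1, C̃_1 = ⋯ = C̃_{k-1} = 0, C̃_k = ⋯ = C̃_{k+ℓ-2} = 1. Then C_n = C̃_{n+k+1} for every n ≥ 0. -/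
theorem shift_of_sequences (k l : ℕ) (hk : 2 ≤ k) (hl : 2 ≤ l)
    (C Ct : ℕ → ℤ)
    (hCinit : ∀ n ≤ l - 1, C n = 1)
    (hCmid : ∀ n, l ≤ n → n ≤ k + l - 2 → C n = C (n - 1) + C (n - l))
    (hCrec : ∀ n, k + l - 1 ≤ n → C n = ∑ m ∈ Finset.Icc l (k + l - 1), C (n - m))
    (hCt0 : Ct 0 = 1)
    (hCt1 : ∀ n, 1 ≤ n → n ≤ k - 1 → Ct n = 0)
    (hCt2 : ∀ n, k ≤ n → n ≤ k + l - 2 → Ct n = 1)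
    (hCtrec : ∀ n, k + l - 1 ≤ n → Ct n = ∑ m ∈ Finset.Icc l (k + l - 1), Ct (n - m)) :
    ∀ n : ℕ, C n = Ct (n + k + 1) := by
  have key : ∀ N, k + l - 1 ≤ N →
      Ct N = ∑ j ∈ Finset.Icc (N - (k + l - 1)) (N - l), Ct j := by
    intro N hN
    rw [hCtrec N hN]
    apply Finset.sum_nbij' (i := fun m => N - m) (j := fun j => N - j)
    · intro m hm
      simp only [Finset.mem_Icc] at *
      omega
    · intro j hj
      simp only [Finset.mem_Icc] at *
      omega
    · intro m hm
      simp only [Finset.mem_Icc] at hm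
      omega
    · intro j hj
      simp only [Finset.mem_Icc] at hj
      omega
    · intro m hm
      rfl
  intro n
  induction n using Nat.strong_induction_on with
  | _ n ih =>
    rcases lt_or_ge n (k + l - 1) with hn | hn
    · rcases lt_or_ge n (l - 2) with h1 | h1
      · -- n ≤ l - 3 : both sides 1
        rw [hCinit n (by omega), hCt2 (n + k + 1) (by omega) (by omega)]
      · rcases lt_or_ge n l with h2 | h2
        · -- n = l - 2 or n = l - 1
          rw [hCinit n (by omega), key (n + k + 1) (by omega)]
          rcases eq_or_lt_of_le h1 with h3 | h3
          · -- n = l - 2 : sum over Icc 0 (k-1), nonzero only at 0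
            have e1 : n + k + 1 - (k + l - 1) = 0 := by omega
            have e2 : n + k + 1 - l = k - 1 := by omega
            rw [e1, e2]
            rw [Finset.sum_eq_single_of_mem 0 (by simp)]
            · exact hCt0.symm
            · intro j hj hj0
              simp only [Finset.mem_Icc] at hj
              exact hCt1 j (by omega) (by omega)
          · -- n = l - 1 : sum over Icc 1 k, nonzero only at k
            have e1 : n + k + 1 - (k + l - 1) = 1 := by omega
            have e2 : n + k + 1 - l = k := by omega
            rw [e1, e2]
            rw [Finset.sum_eq_single_of_mem k (by simp [Finset.mem_Icc]; omega)]
            · exact (hCt2 k le_rfl (by omega)).symm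
            · intro j hj hj0
              simp only [Finset.mem_Icc] at hj
              exact hCt1 j (by omega) (by omega)
        · -- mid case : l ≤ n ≤ k + l - 2
          set a := n + 1 - l with ha
          have ha1 : 1 ≤ a := by omega
          have ha2 : a ≤ k - 1 := by omega
          rw [hCmid n h2 (by omega), ih (n - 1) (by omega), ih (n - l) (by omega)]
          have e1 : n - 1 + k + 1 = n + k := by omega
          have e2 : n - l + k + 1 = a + k := by omega
          rw [e1, e2]
          rw [key (n + k + 1) (by omega), key (n + k) (by omega)]
          have e3 : n + k + 1 - (k + l - 1) = a + 1 := by omega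
          have e4 : n + k + 1 - l = a + k := by omega
          have e5 : n + k - (k + l - 1) = a := by omega
          have e6 : n + k - l = a + k - 1 := by omega
          rw [e3, e4, e5, e6]
          obtain ⟨b, hb⟩ : ∃ b, k = b + 1 := ⟨k - 1, by omega⟩
          have e8 : a + k - 1 = a + b := by omega
          have e7 : a + k = a + b + 1 := by omega
          rw [e8, e7, Finset.sum_Icc_succ_top (by omega)]
          have hins : Finset.Icc a (a + b) = insert a (Finset.Icc (a + 1) (a + b)) := by
            rw [Finset.Icc_add_one_left_eq_Ioc, Finset.Ioc_insert_left (Nat.le_add_right a b)]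
          rw [hins, Finset.sum_insert (by simp), hCt1 a ha1 ha2, zero_add]
    · -- large case
      rw [hCrec n hn, hCtrec (n + k + 1) (by omega)]
      apply Finset.sum_congr rfl
      intro m hm
      simp only [Finset.mem_Icc] at hm
      rw [ih (n - m) (by omega)]
      congr 1
      omega
end
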